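/- Let A be a weighted automaton over V and B a DFA over alphabet V whose accepted language is closed under permutations. Then for every valuation σ : V → ℕ: if there exists a word w : List V with Parikh image σ that is accepted by B, then ⟦A × B⟧ σ = ⟦A⟧ σ; otherwise ⟦A × B⟧ σ = 0. -/

import Mathlib

open scoped ENNReal
open Classical

/-- Weighted automata over a commutative alphabet `V` with weights in `ℝ≥0∞`. -/
structure WA (V : Type) where
  Q : Type
  [fin : Fintype Q]
  [dec : DecidableEq Q]
  w : Q → Q → ℝ≥0∞
  lab : Q → Q → Option V
  I : Q → ℝ≥0∞
  F : Q → ℝ≥0∞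

attribute [instance] WA.fin WA.dec

variable {V : Type} [Fintype V] [DecidableEq V]

/-- Weight of a path of length `n`. -/
noncomputable def WA.pathWeight (A : WA V) {n : ℕ} (p : Fin (n + 1) → A.Q) : ℝ≥0∞ :=
  A.I (p 0) * (∏ i : Fin n, A.w (p i.castSucc) (p i.succ)) * A.F (p (Fin.last n))

/-- Parikh image of a path: the number of `X`-labeled transitions, for each `X : V`. -/
def WA.parikh (A : WA V) {n : ℕ} (p : Fin (n + 1) → A.Q) : V → ℕ := fun X =>
  (Finset.univ.filter fun i : Fin n => A.lab (p i.castSucc) (p i.succ) = some X).card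

/-- Behavior of a weighted automaton, as a map from valuations to `ℝ≥0∞`. -/
noncomputable def WA.behavior (A : WA V) (σ : V → ℕ) : ℝ≥0∞ :=
  ∑' (n : ℕ) (p : {p : Fin (n + 1) → A.Q // A.parikh p = σ}), A.pathWeight p.1

/-- Total mass of a weighted automaton. -/
noncomputable def WA.mass (A : WA V) : ℝ≥0∞ :=
  ∑' σ : V → ℕ, A.behavior σ

/-- Number of transitions with nonzero weight. -/
noncomputable def WA.size (A : WA V) : ℕ :=
  Nat.card {qr : A.Q × A.Q // A.w qr.1 qr.2 ≠ 0}

/-- Deterministic finite automata over alphabet `V` with a finite state type. -/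
structure DFA' (V : Type) where
  S : Type
  [fin : Fintype S]
  [dec : DecidableEq S]
  step : S → V → S
  start : S
  accept : Finset S

attribute [instance] DFA'.fin DFA'.dec

def DFA'.Accepts (B : DFA' V) (w : List V) : Prop :=
  w.foldl B.step B.start ∈ B.accept

/-- The language of `B` is closed under permutations of letters. -/
def DFA'.PermClosed (B : DFA' V) : Prop :=
  ∀ w₁ w₂ : List V, w₁.Perm w₂ → (B.Accepts w₁ ↔ B.Accepts w₂)

/-- Parikh image of a word. -/
def parikhWord (w : List V) : V → ℕ := fun X => w.count X

/-- Product of a weighted automaton with a DFA. -/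
noncomputable def WA.prodDFA (A : WA V) (B : DFA' V) : WA V where
  Q := A.Q × B.S
  w := fun a b =>
    match A.lab a.1 b.1 with
    | some X => if b.2 = B.step a.2 X then A.w a.1 b.1 else 0
    | none => if b.2 = a.2 then A.w a.1 b.1 else 0
  lab := fun a b => A.lab a.1 b.1
  I := fun a => if a.2 = B.start then A.I a.1 else 0
  F := fun a => if a.2 ∈ B.accept then A.F a.1 else 0

/-- `A[X/1]`: relabel every `X`-transition to an `ε`-transition. -/
def WA.subst1 (A : WA V) (X : V) : WA V :=
  { A with lab := fun q r => if A.lab q r = some X then none else A.lab q r }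

/-- `A[X/0]`: set the weight of every `X`-labeled transition to `0`. -/
def WA.subst0 (A : WA V) (X : V) : WA V :=
  { A with w := fun q r => if A.lab q r = some X then 0 else A.w q r }

/-- Weighted disjoint union `A₁ ⊕_{p,q} A₂`. -/
noncomputable def WA.wsum (p q : ℝ≥0∞) (A₁ A₂ : WA V) : WA V where
  Q := A₁.Q ⊕ A₂.Q
  w := fun a b =>
    match a, b with
    | .inl q, .inl r => A₁.w q r
    | .inr q, .inr r => A₂.w q r
    | _, _ => 0
  lab := fun a b =>
    match a, b with
    | .inl q, .inl r => A₁.lab q r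
    | .inr q, .inr r => A₂.lab q r
    | _, _ => none
  I := Sum.elim (fun s => p * A₁.I s) (fun s => q * A₂.I s)
  F := Sum.elim A₁.F A₂.F

/-- Concatenation `A₁ • A₂`. -/
noncomputable def WA.concat (A₁ A₂ : WA V) : WA V where
  Q := A₁.Q ⊕ A₂.Q
  w := fun a b =>
    match a, b with
    | .inl q, .inl r => A₁.w q r
    | .inr s, .inr t => A₂.w s t
    | .inl q, .inr s => A₁.F q * A₂.I s
    | .inr _, .inl _ => 0
  lab := fun a b =>
    match a, b with
    | .inl q, .inl r => A₁.lab q r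
    | .inr s, .inr t => A₂.lab s t
    | _, _ => none
  I := Sum.elim A₁.I (fun _ => 0)
  F := Sum.elim (fun _ => 0) A₂.F

/-- Transition substitution `A₁[Y/A₂]`. -/
noncomputable def WA.tsubst (A₁ : WA V) (Y : V) (A₂ : WA V) : WA V where
  Q := A₁.Q ⊕ (A₁.Q × A₁.Q × A₂.Q)
  w := fun a b =>
    match a, b with
    | .inl q, .inl r => if A₁.lab q r = some Y then 0 else A₁.w q r
    | .inl q, .inr (q', r, s) =>
        if q' = q ∧ A₁.lab q r = some Y then A₁.w q r * A₂.I s else 0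
    | .inr (q, r, s), .inr (q', r', t) =>
        if q' = q ∧ r' = r then A₂.w s t else 0
    | .inr (q, r, s), .inl r' =>
        if r' = r ∧ A₁.lab q r = some Y then A₂.F s else 0
  lab := fun a b =>
    match a, b with
    | .inl q, .inl r => A₁.lab q r
    | .inr (_, _, s), .inr (_, _, t) => A₂.lab s t
    | _, _ => none
  I := Sum.elim A₁.I (fun _ => 0)
  F := Sum.elim A₁.F (fun _ => 0)

/-- The guard DFA `B_{X>0}`. -/
def BXpos (X : V) : DFA' V where
  S := Bool
  step := fun s a => if a = X then true else s
  start := false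
  accept := {true}

/-- The decrement automaton `A^{X--}`. -/
noncomputable def WA.decrA (A : WA V) (X : V) : WA V :=
  let P := A.prodDFA (BXpos X)
  WA.wsum 1 1
    { P with
      lab := fun a b =>
        if a.2 = false ∧ b.2 = true ∧ P.lab a b = some X then none else P.lab a b }
    (A.subst0 X)

/-- Convolution of two maps `(V → ℕ) → ℝ≥0∞`. -/
noncomputable def conv (f g : (V → ℕ) → ℝ≥0∞) : (V → ℕ) → ℝ≥0∞ := fun σ =>
  ∑' p : {p : (V → ℕ) × (V → ℕ) // p.1 + p.2 = σ}, f p.1.1 * g p.1.2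

/-- Indicator (Dirac) function of a valuation. -/
noncomputable def delta (τ : V → ℕ) : (V → ℕ) → ℝ≥0∞ := fun σ => if σ = τ then 1 else 0

/-- `k`-fold convolution power. -/
noncomputable def convPow (g : (V → ℕ) → ℝ≥0∞) : ℕ → ((V → ℕ) → ℝ≥0∞)
  | 0 => delta 0
  | k + 1 => conv (convPow g k) g

/-- Rectangular guards over `V`. -/
inductive Guard (V : Type) : Type where
  | lt : V → ℕ → Guard V
  | mod : V → (n m : ℕ) → n < m → Guard V
  | and : Guard V → Guard V → Guard V
  | not : Guard V → Guard V

/-- Satisfaction of a guard by a valuation. -/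
def Guard.sat : Guard V → (V → ℕ) → Prop
  | .lt X n, σ => σ X < n
  | .mod X n m _, σ => σ X % m = n
  | .and g₁ g₂, σ => g₁.sat σ ∧ g₂.sat σ
  | .not g, σ => ¬g.sat σ

/-- Number of atomic subformulas. -/
def Guard.atoms : Guard V → ℕ
  | .lt _ _ => 1
  | .mod _ _ _ _ => 1
  | .and g₁ g₂ => g₁.atoms + g₂.atoms
  | .not g => g.atoms

/-- All constants in the guard are at most `N`. -/
def Guard.constLe (N : ℕ) : Guard V → Prop
  | .lt _ n => n ≤ N
  | .mod _ n m _ => n ≤ N ∧ m ≤ N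
  | .and g₁ g₂ => g₁.constLe N ∧ g₂.constLe N
  | .not g => g.constLe N

/-- The counting DFA for `X < n`. -/
def ltDFA (X : V) (n : ℕ) : DFA' V where
  S := Fin (n + 1)
  step := fun s a => if a = X then (if h : s.1 < n then ⟨s.1 + 1, by omega⟩ else s) else s
  start := ⟨0, by omega⟩
  accept := Finset.univ.filter fun s => s.1 < n

/-- The counting DFA for `X ≡ n mod m`. -/
def modDFA (X : V) (n m : ℕ) (h : n < m) : DFA' V where
  S := Fin m
  step := fun s a => if a = X then ⟨(s.1 + 1) % m, Nat.mod_lt _ (by omega)⟩ else s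
  start := ⟨0, by omega⟩
  accept := {⟨n, h⟩}

/-- Product DFA. -/
def DFA'.inter (B C : DFA' V) : DFA' V where
  S := B.S × C.S
  step := fun s a => (B.step s.1 a, C.step s.2 a)
  start := (B.start, C.start)
  accept := B.accept ×ˢ C.accept

/-- Complement DFA. -/
def DFA'.compl (B : DFA' V) : DFA' V :=
  { B with accept := B.acceptᶜ }

/-- The guard DFA `B_φ`. -/
def Guard.dfa : Guard V → DFA' V
  | .lt X n => ltDFA X n
  | .mod X n m h => modDFA X n m h
  | .and g₁ g₂ => g₁.dfa.inter g₂.dfa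
  | .not g => g.dfa.compl

/-- Loop-free ReDiP programs; distributions are given by weighted automata. -/
inductive ReDiP (V : Type) : Type 1 where
  | setzero : V → ReDiP V
  | incrConst : V → ℕ → ReDiP V
  | incrDist : V → WA V → ReDiP V
  | incrVar : V → V → ReDiP V
  | iid : V → WA V → V → ReDiP V
  | decr : V → ReDiP V
  | choice : ℝ≥0∞ → ReDiP V → ReDiP V → ReDiP V
  | ite : Guard V → ReDiP V → ReDiP V → ReDiP V
  | observe : Guard V → ReDiP V
  | seq : ReDiP V → ReDiP V → ReDiP V

/-- A distribution automaton for variable `x`: mass exactly `1` and supported on `x`. -/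
def distWf (x : V) (D : WA V) : Prop :=
  D.mass = 1 ∧ ∀ σ : V → ℕ, D.behavior σ ≠ 0 → ∀ y : V, y ≠ x → σ y = 0

/-- Well-formedness of a ReDiP program. -/
def ReDiP.wf : ReDiP V → Prop
  | .incrDist x D => distWf x D
  | .iid x D _ => distWf x D
  | .choice p P₁ P₂ => p ≤ 1 ∧ P₁.wf ∧ P₂.wf
  | .ite _ P₁ P₂ => P₁.wf ∧ P₂.wf
  | .seq P₁ P₂ => P₁.wf ∧ P₂.wf
  | _ => True

/-- `P` contains no `iid` statements. -/
def ReDiP.noIid : ReDiP V → Prop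
  | .iid _ _ _ => False
  | .choice _ P₁ P₂ => P₁.noIid ∧ P₂.noIid
  | .ite _ P₁ P₂ => P₁.noIid ∧ P₂.noIid
  | .seq P₁ P₂ => P₁.noIid ∧ P₂.noIid
  | _ => True

/-- Program size. -/
def ReDiP.size : ReDiP V → ℕ
  | .choice _ P₁ P₂ => 1 + P₁.size + P₂.size
  | .ite _ P₁ P₂ => 1 + P₁.size + P₂.size
  | .seq P₁ P₂ => P₁.size + P₂.size
  | _ => 1

/-- The `(n+1)`-state chain of `X`-transitions (Dirac distribution `δ_n` on `X`). -/
noncomputable def chainX (X : V) (n : ℕ) : WA V where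
  Q := Fin (n + 1)
  w := fun i j => if j.1 = i.1 + 1 then 1 else 0
  lab := fun i j => if j.1 = i.1 + 1 then some X else none
  I := fun i => if i = ⟨0, by omega⟩ then 1 else 0
  F := fun i => if i = Fin.last n then 1 else 0

/-- The three-state chain with one `Y`-transition followed by one `X`-transition. -/
noncomputable def chainYX (Y X : V) : WA V where
  Q := Fin 3
  w := fun i j => if j.1 = i.1 + 1 then 1 else 0
  lab := fun i j => if j.1 = i.1 + 1 then (if i.1 = 0 then some Y else some X) else none
  I := fun i => if i = 0 then 1 else 0
  F := fun i => if i = Fin.last 2 then 1 else 0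

/-- The two-state automaton with a single `Y`-transition. -/
noncomputable def singleY (Y : V) : WA V := chainX Y 1

/-- The automata translation of a ReDiP program (Table 2). -/
noncomputable def ReDiP.sem : ReDiP V → WA V → WA V
  | .setzero x, A => A.subst1 x
  | .incrConst x n, A => A.concat (chainX x n)
  | .incrDist _ D, A => A.concat D
  | .incrVar x y, A => A.tsubst y (chainYX y x)
  | .iid _ D y, A => A.tsubst y ((singleY y).concat D)
  | .decr x, A => A.decrA x
  | .choice p P₁ P₂, A => WA.wsum p (1 - p) (P₁.sem A) (P₂.sem A)
  | .ite φ P₁ P₂, A =>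
      WA.wsum 1 1 (P₁.sem (A.prodDFA φ.dfa)) (P₂.sem (A.prodDFA (Guard.not φ).dfa))
  | .observe φ, A => A.prodDFA φ.dfa
  | .seq P₁ P₂, A => P₂.sem (P₁.sem A)

/-- The parameters (distribution automata sizes, constants, guard atoms) of `P` are
bounded by `d`, `N` and `η`, respectively. -/
def ReDiP.boundedBy (d N η : ℕ) : ReDiP V → Prop
  | .setzero _ => True
  | .incrConst _ n => n ≤ N
  | .incrDist _ D => D.size ≤ d
  | .incrVar _ _ => True
  | .iid _ D _ => D.size ≤ d
  | .decr _ => True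
  | .choice _ P₁ P₂ => P₁.boundedBy d N η ∧ P₂.boundedBy d N η
  | .ite φ P₁ P₂ =>
      φ.atoms ≤ η ∧ φ.constLe N ∧ P₁.boundedBy d N η ∧ P₂.boundedBy d N η
  | .observe φ => φ.atoms ≤ η ∧ φ.constLe N
  | .seq P₁ P₂ => P₁.boundedBy d N η ∧ P₂.boundedBy d N η

/-- Configurations of the operational Markov chain. -/
inductive Conf (V : Type) : Type 1 where
  | run : ReDiP V → (V → ℕ) → Conf V
  | term : (V → ℕ) → Conf V
  | err : Conf V

/-- One-step transition probabilities of the operational Markov chain from `⟨P, σ⟩`. -/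
noncomputable def pstep : ReDiP V → (V → ℕ) → Conf V → ℝ≥0∞
  | .setzero x, σ, c => if c = Conf.term (Function.update σ x 0) then 1 else 0
  | .incrConst x n, σ, c => if c = Conf.term (Function.update σ x (σ x + n)) then 1 else 0
  | .incrDist x D, σ, c =>
      ∑' n : ℕ,
        if c = Conf.term (Function.update σ x (σ x + n)) then
          D.behavior (fun y => if y = x then n else 0)
        else 0
  | .incrVar x y, σ, c => if c = Conf.term (Function.update σ x (σ x + σ y)) then 1 else 0
  | .iid _ _ _, _, _ => 0
  | .decr x, σ, c => if c = Conf.term (Function.update σ x (σ x - 1)) then 1 else 0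
  | .choice p P₁ P₂, σ, c =>
      (if c = Conf.run P₁ σ then p else 0) + (if c = Conf.run P₂ σ then 1 - p else 0)
  | .ite φ P₁ P₂, σ, c =>
      if φ.sat σ then (if c = Conf.run P₁ σ then 1 else 0)
      else (if c = Conf.run P₂ σ then 1 else 0)
  | .observe φ, σ, c =>
      if φ.sat σ then (if c = Conf.term σ then 1 else 0)
      else (if c = Conf.err then 1 else 0)
  | .seq P₁ P₂, σ, c =>
      match c with
      | .run Q σ' =>
          (if Q = P₂ then pstep P₁ σ (Conf.term σ') else 0) +
          (match Q with
           | .seq P₁' P₂' => if P₂' = P₂ then pstep P₁ σ (Conf.run P₁' σ') else 0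
           | _ => 0)
      | .term _ => 0
      | .err => pstep P₁ σ Conf.err

/-- Transition probabilities between configurations (terminal and error states are absorbing
with no outgoing transitions). -/
noncomputable def cstep : Conf V → Conf V → ℝ≥0∞
  | .run P σ, c => pstep P σ c
  | _, _ => 0

/-- Initial distribution of the operational Markov chain `M(A, P)`. -/
noncomputable def mcInit (A : WA V) (P : ReDiP V) : Conf V → ℝ≥0∞
  | .run P' σ => if P' = P then A.behavior σ else 0
  | _ => 0

/-- Reachability probability `Pr^{M(A,P)}(◇ t)`: the sum over all finite sequences of
configurations ending at `t` and avoiding `t` before, of the initial weight of the first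
configuration times the product of the transition probabilities. -/
noncomputable def reachProb (A : WA V) (P : ReDiP V) (t : Conf V) : ℝ≥0∞ :=
  ∑' (k : ℕ)
      (p : {p : Fin (k + 1) → Conf V //
            p (Fin.last k) = t ∧ ∀ i : Fin k, p i.castSucc ≠ t}),
    mcInit A P (p.1 0) * ∏ i : Fin k, cstep (p.1 i.castSucc) (p.1 i.succ)


/-! ### Auxiliary material for `stmt_2` -/

section Stmt2Aux

variable {V : Type} [Fintype V] [DecidableEq V]

/-- Step function on optional letters: `none` is an ε-move. -/
def stepO (B : DFA' V) (s : B.S) (o : Option V) : B.S := o.elim s (B.step s)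

lemma foldl_stepO (B : DFA' V) (L : List (Option V)) (s : B.S) :
    L.foldl (stepO B) s = (L.filterMap id).foldl B.step s := by
  induction L generalizing s with
  | nil => rfl
  | cons o t ih => cases o <;> simp [stepO, ih]

lemma count_filterMap_id {α : Type*} [DecidableEq α] (L : List (Option α)) (a : α) :
    (L.filterMap id).count a = L.count (some a) := by
  induction L with
  | nil => rfl
  | cons o t ih => cases o <;> simp_all [List.count_cons]

lemma count_ofFn {α : Type*} [BEq α] [LawfulBEq α] [DecidableEq α] (a : α) :
    ∀ {n : ℕ} (l : Fin n → α),
      (List.ofFn l).count a = ∑ i : Fin n, if l i = a then 1 else 0 := by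
  intro n
  induction n with
  | zero => intro l; simp
  | succ n ih =>
    intro l
    rw [List.ofFn_succ, Fin.sum_univ_succ, List.count_cons, ih, add_comm]
    simp [beq_iff_eq]

variable (A : WA V) (B : DFA' V)

/-- The list of transition labels along a path. -/
def labs {n : ℕ} (p : Fin (n + 1) → A.Q) : List (Option V) :=
  List.ofFn fun i : Fin n => A.lab (p i.castSucc) (p i.succ)

/-- The word read along a path. -/
def pword {n : ℕ} (p : Fin (n + 1) → A.Q) : List V := (labs A p).filterMap id

/-- The run of the DFA `B` along a path of `A`. -/
def runB {n : ℕ} (p : Fin (n + 1) → A.Q) (i : Fin (n + 1)) : B.S :=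
  ((labs A p).take i).foldl (stepO B) B.start

lemma runB_zero {n : ℕ} (p : Fin (n + 1) → A.Q) : runB A B p 0 = B.start := rfl

lemma runB_succ {n : ℕ} (p : Fin (n + 1) → A.Q) (i : Fin n) :
    runB A B p i.succ = stepO B (runB A B p i.castSucc)
      (A.lab (p i.castSucc) (p i.succ)) := by
  unfold runB
  have h1 : (i.succ : ℕ) = (i.castSucc : ℕ) + 1 := rfl
  rw [h1, List.take_succ, List.foldl_append]
  have h2 : (labs A p)[(i.castSucc : ℕ)]? = some (A.lab (p i.castSucc) (p i.succ)) := by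
    simp [labs, List.getElem?_ofFn, List.ofFnNthVal, i.isLt]
  rw [h2]
  rfl

lemma runB_last {n : ℕ} (p : Fin (n + 1) → A.Q) :
    runB A B p (Fin.last n) = (labs A p).foldl (stepO B) B.start := by
  unfold runB
  rw [List.take_of_length_le (by simp [labs])]

lemma runB_last_mem_iff {n : ℕ} (p : Fin (n + 1) → A.Q) :
    runB A B p (Fin.last n) ∈ B.accept ↔ B.Accepts (pword A p) := by
  rw [runB_last, foldl_stepO]
  rfl

lemma parikh_pword {n : ℕ} (p : Fin (n + 1) → A.Q) :
    parikhWord (pword A p) = A.parikh p := by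
  funext X
  rw [parikhWord, pword, count_filterMap_id, labs, count_ofFn, WA.parikh,
    Finset.card_filter]

/-- The lift of a path of `A` to the product automaton. -/
def liftP {n : ℕ} (p : Fin (n + 1) → A.Q) : Fin (n + 1) → (A.prodDFA B).Q :=
  fun i => (p i, runB A B p i)

lemma prod_w_eq (a b : (A.prodDFA B).Q) :
    (A.prodDFA B).w a b =
      if b.2 = stepO B a.2 (A.lab a.1 b.1) then A.w a.1 b.1 else 0 := by
  show (match A.lab a.1 b.1 with
    | some X => if b.2 = B.step a.2 X then A.w a.1 b.1 else 0
    | none => if b.2 = a.2 then A.w a.1 b.1 else 0) = _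
  cases A.lab a.1 b.1 <;> rfl

lemma prod_parikh {n : ℕ} (P : Fin (n + 1) → (A.prodDFA B).Q) :
    (A.prodDFA B).parikh P = A.parikh (fun i => (P i).1) := rfl

/-- A product path "tracks" the DFA. -/
def Tracks {n : ℕ} (P : Fin (n + 1) → (A.prodDFA B).Q) : Prop :=
  ∀ i, (P i).2 = runB A B (fun j => (P j).1) i

lemma tracks_iff {n : ℕ} (P : Fin (n + 1) → (A.prodDFA B).Q) :
    Tracks A B P ↔ (P 0).2 = B.start ∧
      ∀ i : Fin n, (P i.succ).2 =
        stepO B ((P i.castSucc).2) (A.lab (P i.castSucc).1 (P i.succ).1) := by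
  constructor
  · intro h
    refine ⟨h 0, fun i => ?_⟩
    rw [h i.succ, h i.castSucc, runB_succ]
  · rintro ⟨h0, hs⟩ i
    induction i using Fin.induction with
    | zero => exact h0
    | succ j ih => rw [hs j, ih, runB_succ]

lemma prod_pathWeight {n : ℕ} (P : Fin (n + 1) → (A.prodDFA B).Q) :
    (A.prodDFA B).pathWeight P =
      if Tracks A B P ∧ runB A B (fun j => (P j).1) (Fin.last n) ∈ B.accept
      then A.pathWeight (fun i => (P i).1) else 0 := by
  classical
  have hI : (A.prodDFA B).I (P 0) =
      if (P 0).2 = B.start then A.I (P 0).1 else 0 := rfl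
  have hF : (A.prodDFA B).F (P (Fin.last n)) =
      if (P (Fin.last n)).2 ∈ B.accept then A.F (P (Fin.last n)).1 else 0 := rfl
  unfold WA.pathWeight
  rw [hI, hF]
  by_cases hT : Tracks A B P
  · have h := (tracks_iff A B P).1 hT
    rw [if_pos h.1]
    have hprod : (∏ i : Fin n, (A.prodDFA B).w (P i.castSucc) (P i.succ)) =
        ∏ i : Fin n, A.w (P i.castSucc).1 (P i.succ).1 := by
      refine Finset.prod_congr rfl fun i _ => ?_
      rw [prod_w_eq, if_pos (h.2 i)]
    rw [hprod]
    have hlast : (P (Fin.last n)).2 = runB A B (fun j => (P j).1) (Fin.last n) :=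
      hT (Fin.last n)
    rw [hlast]
    by_cases hacc : runB A B (fun j => (P j).1) (Fin.last n) ∈ B.accept
    · rw [if_pos hacc, if_pos ⟨hT, hacc⟩]
    · have hc : ¬(Tracks A B P ∧
          runB A B (fun j => (P j).1) (Fin.last n) ∈ B.accept) := fun h => hacc h.2
      rw [if_neg hacc, if_neg hc, mul_zero]
  · have hc : ¬(Tracks A B P ∧
        runB A B (fun j => (P j).1) (Fin.last n) ∈ B.accept) := fun h => hT h.1
    rw [if_neg hc]
    have hT' : ¬((P 0).2 = B.start ∧ ∀ i : Fin n, (P i.succ).2 =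
        stepO B ((P i.castSucc).2) (A.lab (P i.castSucc).1 (P i.succ).1)) :=
      fun h => hT ((tracks_iff A B P).2 h)
    rcases not_and_or.1 hT' with h0 | hs
    · rw [if_neg h0, zero_mul, zero_mul]
    · push_neg at hs
      obtain ⟨i, hi⟩ := hs
      have : (∏ i : Fin n, (A.prodDFA B).w (P i.castSucc) (P i.succ)) = 0 := by
        refine Finset.prod_eq_zero (Finset.mem_univ i) ?_
        rw [prod_w_eq, if_neg hi]
      rw [this, mul_zero, zero_mul]

lemma liftP_tracks {n : ℕ} (p : Fin (n + 1) → A.Q) : Tracks A B (liftP A B p) := by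
  intro i; rfl

lemma behavior_sum (C : WA V) (σ : V → ℕ) :
    C.behavior σ = ∑' n : ℕ,
      ∑ p ∈ Finset.univ.filter (fun p : Fin (n + 1) → C.Q => C.parikh p = σ),
        C.pathWeight p := by
  unfold WA.behavior
  refine tsum_congr fun n => ?_
  rw [tsum_fintype]
  exact (Finset.sum_subtype _ (by simp) _).symm

end Stmt2Aux

/-- product with a permutation-closed DFA filters the behavior. -/
theorem stmt_2 (V : Type) [Fintype V] [DecidableEq V] (A : WA V) (B : DFA' V)
    (hB : B.PermClosed) (σ : V → ℕ) :
    (A.prodDFA B).behavior σ =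
      if ∃ w : List V, parikhWord w = σ ∧ B.Accepts w then A.behavior σ else 0 := by
  classical
  set acc : Prop := ∃ w : List V, parikhWord w = σ ∧ B.Accepts w with hacc
  have key : ∀ (n : ℕ) (p : Fin (n + 1) → A.Q), A.parikh p = σ →
      (runB A B p (Fin.last n) ∈ B.accept ↔ acc) := by
    intro n p hp
    rw [runB_last_mem_iff]
    constructor
    · intro h
      exact ⟨pword A p, by rw [parikh_pword, hp], h⟩
    · rintro ⟨w, hw, hwacc⟩
      have hperm : w.Perm (pword A p) := by
        rw [List.perm_iff_count]
        intro a
        have : parikhWord w a = parikhWord (pword A p) a := by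
          rw [hw, parikh_pword, hp]
        exact this
      exact (hB w (pword A p) hperm).1 hwacc
  rw [behavior_sum]
  have step1 : ∀ n : ℕ,
      (∑ P ∈ Finset.univ.filter
          (fun P : Fin (n + 1) → (A.prodDFA B).Q => (A.prodDFA B).parikh P = σ),
        (A.prodDFA B).pathWeight P) =
      (if acc then
        ∑ p ∈ Finset.univ.filter (fun p : Fin (n + 1) → A.Q => A.parikh p = σ),
          A.pathWeight p
      else 0) := by
    intro n
    have e1 : (∑ P ∈ Finset.univ.filter
          (fun P : Fin (n + 1) → (A.prodDFA B).Q => (A.prodDFA B).parikh P = σ),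
        (A.prodDFA B).pathWeight P) =
        ∑ P ∈ Finset.univ.filter
          (fun P : Fin (n + 1) → (A.prodDFA B).Q =>
            (A.prodDFA B).parikh P = σ ∧ Tracks A B P),
          (A.prodDFA B).pathWeight P := by
      refine (Finset.sum_subset (fun P hP => ?_) (fun P hP hP' => ?_)).symm
      · simp only [Finset.mem_filter, Finset.mem_univ, true_and] at hP ⊢
        exact hP.1
      · simp only [Finset.mem_filter, Finset.mem_univ, true_and] at hP hP'
        rw [prod_pathWeight, if_neg]
        intro h
        exact hP' ⟨hP, h.1⟩
    rw [e1]
    have e2 : (∑ P ∈ Finset.univ.filter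
          (fun P : Fin (n + 1) → (A.prodDFA B).Q =>
            (A.prodDFA B).parikh P = σ ∧ Tracks A B P),
          (A.prodDFA B).pathWeight P) =
        ∑ p ∈ Finset.univ.filter (fun p : Fin (n + 1) → A.Q => A.parikh p = σ),
          (A.prodDFA B).pathWeight (liftP A B p) := by
      refine Finset.sum_nbij' (fun P => fun i => (P i).1) (liftP A B) ?_ ?_ ?_ ?_ ?_
      · intro P hP
        simp only [Finset.mem_filter, Finset.mem_univ, true_and] at hP ⊢
        rw [← prod_parikh]; exact hP.1
      · intro p hp
        simp only [Finset.mem_filter, Finset.mem_univ, true_and] at hp ⊢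
        exact ⟨by rw [prod_parikh]; exact hp, liftP_tracks A B p⟩
      · intro P hP
        simp only [Finset.mem_filter, Finset.mem_univ, true_and] at hP
        funext i
        have := (hP.2 i).symm
        exact Prod.ext rfl this
      · intro p hp; rfl
      · intro P hP
        simp only [Finset.mem_filter, Finset.mem_univ, true_and] at hP
        have hPl : liftP A B (fun i => (P i).1) = P := by
          funext i
          exact Prod.ext rfl (hP.2 i).symm
        rw [hPl]
    rw [e2]
    have e3 : ∀ p ∈ Finset.univ.filter (fun p : Fin (n + 1) → A.Q => A.parikh p = σ),
        (A.prodDFA B).pathWeight (liftP A B p) =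
          if acc then A.pathWeight p else 0 := by
      intro p hp
      simp only [Finset.mem_filter, Finset.mem_univ, true_and] at hp
      rw [prod_pathWeight]
      have hfst : (fun j => ((liftP A B p) j).1) = p := rfl
      rw [hfst]
      by_cases h : acc
      · rw [if_pos ⟨liftP_tracks A B p, (key n p hp).2 h⟩, if_pos h]
      · rw [if_neg (fun hc => h ((key n p hp).1 hc.2)), if_neg h]
    rw [Finset.sum_congr rfl e3]
    by_cases h : acc
    · simp [h]
    · simp [h]
  rw [tsum_congr step1]
  by_cases h : acc
  · rw [if_pos h, behavior_sum]
    exact tsum_congr fun n => if_pos h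
  · rw [if_neg h]
    simp [h]
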